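/- For $n \ge 1$, the $(n+1) \times (n+1)$ Vandermonde matrix $A$ with entries $A_{ij} = t_j^i$ built on any nonnegative nodes $0 \le t_0 < \cdots < t_n$ satisfies: the solution $w$ of $Aw = ((-1)^i)_{i=0}^n$ has $\|w\|_1 = \sum_i |w_i| = P(-1)$ where $P(x) = \sum_{i=0}^n (-1)^i \ell_i(x)$ is the unique polynomial of degree at most $n$ with $P(t_i) = (-1)^i$; consequently $\|w\|_1 \ge T_n(1 + 2/t_n)$. -/

import Mathlib

open Polynomial


lemma abs_T_le_one (n : ℤ) {y : ℝ} (h1 : -1 ≤ y) (h2 : y ≤ 1) :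
    |(Chebyshev.T ℝ n).eval y| ≤ 1 := by
  have : y = Real.cos (Real.arccos y) := (Real.cos_arccos h1 h2).symm
  rw [this, Chebyshev.T_real_cos]
  exact Real.abs_cos_le_one _

lemma one_le_T (n : ℕ) {x : ℝ} (hx : 1 ≤ x) :
    1 ≤ (Chebyshev.T ℝ n).eval x := by
  suffices h : ∀ m : ℕ, 1 ≤ (Chebyshev.T ℝ m).eval x ∧
      (Chebyshev.T ℝ m).eval x ≤ (Chebyshev.T ℝ (m+1)).eval x from (h n).1
  intro m
  induction m with
  | zero => simp [Chebyshev.T_zero, Chebyshev.T_one, hx]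
  | succ k ih =>
    obtain ⟨h1, h2⟩ := ih
    have h3 : (1:ℝ) ≤ (Chebyshev.T ℝ (k+1)).eval x := le_trans h1 h2
    refine ⟨h3, ?_⟩
    have heval : (Chebyshev.T ℝ ((k:ℤ)+2)).eval x
        = 2 * x * (Chebyshev.T ℝ ((k:ℤ)+1)).eval x - (Chebyshev.T ℝ k).eval x := by
      rw [Chebyshev.T_add_two]; simp
    push_cast
    rw [show ((k:ℤ)+1+1) = (k:ℤ)+2 by ring, heval]
    nlinarith

lemma natDegree_T_le (n : ℕ) : (Chebyshev.T ℝ n).natDegree ≤ n := by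
  suffices h : ∀ m : ℕ, (Chebyshev.T ℝ m).natDegree ≤ m ∧
      (Chebyshev.T ℝ (m+1)).natDegree ≤ m+1 from (h n).1
  intro m
  induction m with
  | zero => constructor <;> simp [Chebyshev.T_zero, Chebyshev.T_one]
  | succ k ih =>
    obtain ⟨h1, h2⟩ := ih
    refine ⟨h2, ?_⟩
    have := Chebyshev.T_add_two ℝ k
    push_cast
    rw [show ((k:ℤ)+1+1) = (k:ℤ)+2 by ring, this]
    refine le_trans (natDegree_sub_le _ _) ?_
    simp only [max_le_iff]
    constructor
    · refine le_trans (natDegree_mul_le) ?_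
      have : (2 * X : ℝ[X]).natDegree ≤ 1 := le_trans natDegree_mul_le (by simp)
      omega
    · omega

lemma exists_root_Ioo (f : ℝ[X]) {a b : ℝ} (hab : a < b)
    (h : f.eval a * f.eval b < 0) : ∃ x ∈ Set.Ioo a b, f.eval x = 0 := by
  have hc : ContinuousOn (fun x => f.eval x) (Set.Icc a b) := f.continuousOn
  rcases lt_or_ge (f.eval a) 0 with ha | ha
  · have hb : 0 < f.eval b := by nlinarith
    have := intermediate_value_Ioo hab.le hc
    have h0 : (0:ℝ) ∈ Set.Ioo (f.eval a) (f.eval b) := ⟨ha, hb⟩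
    obtain ⟨x, hx, hfx⟩ := this h0
    exact ⟨x, hx, hfx⟩
  · have ha' : 0 < f.eval a := by
      rcases ha.lt_or_eq with h' | h'
      · exact h'
      · exfalso; rw [← h'] at h; simp at h
    have hb : f.eval b < 0 := by nlinarith
    have := intermediate_value_Ioo' hab.le hc
    have h0 : (0:ℝ) ∈ Set.Ioo (f.eval b) (f.eval a) := ⟨hb, ha'⟩
    obtain ⟨x, hx, hfx⟩ := this h0
    exact ⟨x, hx, hfx⟩

lemma cheb_bound (n : ℕ) (hn : 1 ≤ n) (t : Fin (n + 1) → ℝ) (ht0 : 0 ≤ t 0)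
    (htmono : StrictMono t) (P : ℝ[X]) (hdeg : P.natDegree ≤ n)
    (hPt : ∀ i : Fin (n + 1), P.eval (t i) = (-1 : ℝ) ^ (i : ℕ))
    (hP0 : 0 ≤ P.eval (-1)) :
    (Chebyshev.T ℝ n).eval (1 + 2 / t (Fin.last n)) ≤ P.eval (-1) := by
  set a := t (Fin.last n) with ha_def
  have ha : 0 < a := by
    have h0 : (0 : Fin (n+1)) < Fin.last n := by
      rw [Fin.lt_def]; simp; omega
    exact lt_of_le_of_lt ht0 (htmono h0)
  set L : ℝ[X] := C 1 - C (2/a) * X with hL_def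
  set Q : ℝ[X] := (Chebyshev.T ℝ n).comp L with hQ_def
  have hQeval : ∀ x : ℝ, Q.eval x = (Chebyshev.T ℝ n).eval (1 - 2/a * x) := by
    intro x; simp [hQ_def, hL_def, eval_comp]
  have hQdeg : Q.natDegree ≤ n := by
    refine le_trans natDegree_comp_le ?_
    have hLdeg : L.natDegree ≤ 1 := by
      refine le_trans (natDegree_sub_le _ _) ?_
      simp only [max_le_iff]
      exact ⟨by simp, le_trans natDegree_mul_le (by simp)⟩
    calc (Chebyshev.T ℝ n).natDegree * L.natDegree ≤ n * 1 :=
          Nat.mul_le_mul (natDegree_T_le n) hLdeg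
      _ = n := by ring
  have hQt : ∀ i : Fin (n+1), |Q.eval (t i)| ≤ 1 := by
    intro i
    rw [hQeval]
    have h1 : t 0 ≤ t i := htmono.monotone (Fin.zero_le i)
    have h2 : t i ≤ a := htmono.monotone (Fin.le_last i)
    have hti0 : 0 ≤ t i := le_trans ht0 h1
    refine abs_T_le_one _ ?_ ?_
    · have : 2/a * t i ≤ 2 := by
        rw [div_mul_eq_mul_div, div_le_iff₀ ha]; nlinarith
      linarith
    · have : 0 ≤ 2/a * t i := by positivity
      linarith
  have hQm : Q.eval (-1) = (Chebyshev.T ℝ n).eval (1 + 2/a) := by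
    rw [hQeval]; ring_nf
  have hQm1 : 1 ≤ Q.eval (-1) := by
    rw [hQm]
    refine one_le_T n ?_
    have : 0 < 2/a := by positivity
    linarith
  by_contra hcon
  push_neg at hcon
  rw [← hQm] at hcon
  set S : ℝ[X] := C (P.eval (-1)) * Q - C (Q.eval (-1)) * P with hS_def
  have hSdeg : S.natDegree ≤ n := by
    refine le_trans (natDegree_sub_le _ _) ?_
    simp only [max_le_iff]
    exact ⟨le_trans natDegree_mul_le (by simp [hQdeg]),
           le_trans natDegree_mul_le (by simp [hdeg])⟩
  have hSm : S.eval (-1) = 0 := by simp [hS_def]; ring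
  have hsign : ∀ i : Fin (n+1), (-1:ℝ)^(i:ℕ) * S.eval (t i) < 0 := by
    intro i
    have hSe : S.eval (t i) = P.eval (-1) * Q.eval (t i) - Q.eval (-1) * (-1:ℝ)^(i:ℕ) := by
      simp [hS_def, hPt i]
    have h1 : (-1:ℝ)^(i:ℕ) * Q.eval (t i) ≤ 1 := by
      refine le_trans (le_abs_self _) ?_
      rw [abs_mul, abs_pow, abs_neg, abs_one, one_pow, one_mul]
      exact hQt i
    have hsq : ((-1:ℝ)^(i:ℕ))^2 = 1 := by
      rw [← pow_mul, mul_comm, pow_mul]; simp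
    rw [hSe]
    nlinarith [hsq, hcon, hQm1, mul_nonneg hP0 (sub_nonneg.2 h1)]
  -- roots in each gap
  have hgap : ∀ i : Fin n, ∃ x ∈ Set.Ioo (t i.castSucc) (t i.succ), S.eval x = 0 := by
    intro i
    have hab : t i.castSucc < t i.succ := htmono Fin.castSucc_lt_succ
    refine exists_root_Ioo S hab ?_
    have h1 := hsign i.castSucc
    have h2 := hsign i.succ
    have e1 : ((i.castSucc : Fin (n+1)) : ℕ) = (i : ℕ) := rfl
    have e2 : ((i.succ : Fin (n+1)) : ℕ) = (i : ℕ) + 1 := rfl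
    rw [e1] at h1
    rw [e2, pow_succ] at h2
    have hsq : ((-1:ℝ)^(i:ℕ))^2 = 1 := by
      rw [← pow_mul, mul_comm, pow_mul]; simp
    nlinarith [h1, h2]
  choose r hr hr0 using hgap
  set g : Fin (n+1) → ℝ := Fin.cons (-1) r with hg_def
  have hrpos : ∀ i : Fin n, 0 ≤ r i := by
    intro i
    have := (hr i).1
    have : t 0 ≤ t i.castSucc := htmono.monotone (Fin.zero_le _)
    linarith [(hr i).1]
  have hrlt : ∀ i j : Fin n, i < j → r i < r j := by
    intro i j hij
    have h1 : r i < t i.succ := (hr i).2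
    have h2 : t j.castSucc < r j := (hr j).1
    have h3 : t i.succ ≤ t j.castSucc := by
      refine htmono.monotone ?_
      rw [Fin.le_def]
      simp only [Fin.val_succ, Fin.coe_castSucc]
      have := Fin.lt_def.mp hij
      omega
    linarith
  have hginj : Function.Injective g := by
    intro i j hij
    induction i using Fin.cases with
    | zero =>
      induction j using Fin.cases with
      | zero => rfl
      | succ j =>
        exfalso
        rw [hg_def] at hij
        simp only [Fin.cons_zero, Fin.cons_succ] at hij
        have := hrpos j
        linarith
    | succ i =>
      induction j using Fin.cases with
      | zero =>
        exfalso
        rw [hg_def] at hij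
        simp only [Fin.cons_zero, Fin.cons_succ] at hij
        have := hrpos i
        linarith
      | succ j =>
        rw [hg_def] at hij
        simp only [Fin.cons_succ] at hij
        congr 1
        rcases lt_trichotomy i j with h | h | h
        · exact absurd hij (ne_of_lt (hrlt i j h))
        · exact h
        · exact absurd hij.symm (ne_of_lt (hrlt j i h))
  have hgzero : ∀ i : Fin (n+1), S.eval (g i) = 0 := by
    intro i
    induction i using Fin.cases with
    | zero => rw [hg_def]; simpa using hSm
    | succ i => rw [hg_def]; simpa using hr0 i
  have hSzero : S = 0 := by
    refine eq_zero_of_degree_lt_of_eval_index_eq_zero (v := g) (Finset.univ : Finset (Fin (n+1))) ?_ ?_ ?_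
    · exact Function.Injective.injOn hginj
    · have : S.degree ≤ (n : WithBot ℕ) := le_trans degree_le_natDegree (by exact_mod_cast hSdeg)
      refine lt_of_le_of_lt this ?_
      simp only [Finset.card_univ, Fintype.card_fin]
      exact_mod_cast Nat.lt_succ_self n
    · intro i _; exact hgzero i
  have := hsign 0
  rw [hSzero] at this
  simp at this

/-- the 1-norm of the Vandermonde solution equals `P(-1)` for the
equioscillating interpolant `P = ∑ (-1)^i ℓᵢ`, and hence is at least `T_n(1 + 2/t_n)`. -/
theorem stmt_19 (n : ℕ) (hn : 1 ≤ n) (t : Fin (n + 1) → ℝ) (ht0 : 0 ≤ t 0)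
    (htmono : StrictMono t)
    (w : Fin (n + 1) → ℝ)
    (hw : ∀ i : Fin (n + 1), ∑ j : Fin (n + 1), w j * t j ^ (i : ℕ) = (-1 : ℝ) ^ (i : ℕ))
    (P : ℝ[X])
    (hP : P = ∑ i : Fin (n + 1), C ((-1 : ℝ) ^ (i : ℕ)) * Lagrange.basis Finset.univ t i) :
    ∑ i : Fin (n + 1), |w i| = P.eval (-1) ∧
      (Polynomial.Chebyshev.T ℝ n).eval (1 + 2 / t (Fin.last n)) ≤ ∑ i : Fin (n + 1), |w i| := by
  have part1 : ∑ i : Fin (n + 1), |w i| = P.eval (-1) := by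
      have hvs : Set.InjOn t (Finset.univ : Finset (Fin (n+1))) :=
        Function.Injective.injOn htmono.injective
      have hbdeg : ∀ k : Fin (n+1), (Lagrange.basis Finset.univ t k).natDegree = n := by
        intro k
        rw [Lagrange.natDegree_basis hvs (Finset.mem_univ k)]
        simp
      have key : ∀ q : ℝ[X], q.natDegree ≤ n →
          ∑ j : Fin (n+1), w j * q.eval (t j) = q.eval (-1) := by
        intro q hq
        have hq' : q.natDegree < n + 1 := Nat.lt_succ_of_le hq
        have hev : ∀ y : ℝ, q.eval y = ∑ i : Fin (n+1), q.coeff (i : ℕ) * y ^ (i : ℕ) := by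
          intro y
          rw [eval_eq_sum_range' hq', ← Fin.sum_univ_eq_sum_range]
        calc ∑ j : Fin (n+1), w j * q.eval (t j)
            = ∑ j : Fin (n+1), ∑ i : Fin (n+1), q.coeff (i:ℕ) * (w j * t j ^ (i:ℕ)) := by
              refine Finset.sum_congr rfl fun j _ => ?_
              rw [hev (t j), Finset.mul_sum]
              exact Finset.sum_congr rfl fun i _ => by ring
          _ = ∑ i : Fin (n+1), q.coeff (i:ℕ) * ∑ j : Fin (n+1), w j * t j ^ (i:ℕ) := by
              rw [Finset.sum_comm]
              exact Finset.sum_congr rfl fun i _ => by rw [Finset.mul_sum]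
          _ = ∑ i : Fin (n+1), q.coeff (i:ℕ) * (-1:ℝ)^(i:ℕ) := by
              exact Finset.sum_congr rfl fun i _ => by rw [hw i]
          _ = q.eval (-1) := (hev (-1)).symm
      have hwk : ∀ k : Fin (n+1), w k = (Lagrange.basis Finset.univ t k).eval (-1) := by
        intro k
        have hb := key (Lagrange.basis Finset.univ t k) (le_of_eq (hbdeg k))
        rw [← hb]
        rw [Finset.sum_eq_single k]
        · rw [Lagrange.eval_basis_self hvs (Finset.mem_univ k), mul_one]
        · intro j _ hjk
          rw [Lagrange.eval_basis_of_ne (Ne.symm hjk) (Finset.mem_univ j), mul_zero]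
        · intro h; exact absurd (Finset.mem_univ k) h
      have habs : ∀ k : Fin (n+1), |w k| = (-1:ℝ)^(k:ℕ) * w k := by
        intro k
        have hnn : 0 ≤ (-1:ℝ)^(k:ℕ) * w k := by
          rw [hwk k]
          have heq : (Lagrange.basis Finset.univ t k).eval (-1)
              = ∏ j ∈ Finset.univ.erase k, ((t k - t j)⁻¹ * (-1 - t j)) := by
            rw [Lagrange.basis, eval_prod]
            exact Finset.prod_congr rfl fun j _ => by simp [Lagrange.basisDivisor]
          rw [heq]
          set f : Fin (n+1) → ℝ := fun j => (t k - t j)⁻¹ * (-1 - t j) with hf_def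
          have hsplit : ∀ j ∈ Finset.univ.erase k,
              f j = (if j < k then (-1:ℝ) else 1) * |f j| := by
            intro j hj
            have hjk : j ≠ k := (Finset.mem_erase.mp hj).1
            have htj0 : 0 ≤ t j := le_trans ht0 (htmono.monotone (Fin.zero_le j))
            have hneg : -1 - t j < 0 := by linarith
            by_cases h : j < k
            · have : 0 < (t k - t j)⁻¹ := inv_pos.2 (by linarith [htmono h])
              have hfneg : f j < 0 := mul_neg_of_pos_of_neg this hneg
              rw [if_pos h, abs_of_neg hfneg]; ring
            · have hkj : k < j := lt_of_le_of_ne (not_lt.mp h) (Ne.symm hjk)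
              have : (t k - t j)⁻¹ < 0 := inv_lt_zero.2 (by linarith [htmono hkj])
              have hfpos : 0 < f j := mul_pos_of_neg_of_neg this hneg
              rw [if_neg h, abs_of_pos hfpos]; ring
          rw [Finset.prod_congr rfl hsplit, Finset.prod_mul_distrib]
          have hfilt : (Finset.univ.erase k).filter (fun j => j < k) = Finset.Iio k := by
            ext j
            simp only [Finset.mem_filter, Finset.mem_erase, Finset.mem_univ, Finset.mem_Iio,
              true_and, and_iff_right_iff_imp]
            exact fun h => ⟨ne_of_lt h, trivial⟩
          have hprodsgn : ∏ j ∈ Finset.univ.erase k, (if j < k then (-1:ℝ) else 1)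
              = (-1:ℝ)^(k:ℕ) := by
            rw [Finset.prod_ite, Finset.prod_const, Finset.prod_const, one_pow, mul_one,
              hfilt, Fin.card_Iio]
          rw [hprodsgn, ← mul_assoc, ← pow_add, ← two_mul, pow_mul]
          simp only [neg_one_sq, one_pow, one_mul]
          exact Finset.prod_nonneg fun j _ => abs_nonneg _
        have h2 : |w k| = |(-1:ℝ)^(k:ℕ) * w k| := by
          rw [abs_mul, abs_pow, abs_neg, abs_one, one_pow, one_mul]
        rw [h2, abs_of_nonneg hnn]
      rw [hP, eval_finset_sum]
      refine Finset.sum_congr rfl fun i _ => ?_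
      rw [habs i, hwk i, eval_mul, eval_C]
  refine ⟨part1, ?_⟩
  rw [part1]
  have hvs : Set.InjOn t (Finset.univ : Finset (Fin (n+1))) :=
    Function.Injective.injOn htmono.injective
  have hbdeg : ∀ k : Fin (n+1), (Lagrange.basis Finset.univ t k).natDegree = n := by
    intro k
    rw [Lagrange.natDegree_basis hvs (Finset.mem_univ k)]
    simp
  have hdeg : P.natDegree ≤ n := by
    rw [hP]
    refine natDegree_sum_le_of_forall_le _ _ fun i _ => ?_
    refine le_trans natDegree_mul_le ?_
    simp [hbdeg i]
  have hPt : ∀ i : Fin (n + 1), P.eval (t i) = (-1 : ℝ) ^ (i : ℕ) := by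
    intro i
    rw [hP, eval_finset_sum, Finset.sum_eq_single i]
    · rw [eval_mul, eval_C, Lagrange.eval_basis_self hvs (Finset.mem_univ i), mul_one]
    · intro j _ hji
      rw [eval_mul, eval_C, Lagrange.eval_basis_of_ne hji (Finset.mem_univ i), mul_zero]
    · intro h; exact absurd (Finset.mem_univ i) h
  have hP0 : 0 ≤ P.eval (-1) := by
    rw [← part1]
    exact Finset.sum_nonneg fun i _ => abs_nonneg _
  exact cheb_bound n hn t ht0 htmono P hdeg hPt hP0
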